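/- Let k be a perfect field of characteristic p > 0, S = k[x_1,…,x_n], e ≥ 1, q = p^e, I ⊆ S an ideal, R = S/I, and π : S → R the canonical surjection. Let M ⊆ Hom_S(F^e_* S, S) be the F^e_* S-submodule (F^e_*(I^{[q]} : I))·Hom_S(F^e_* S, S), i.e., the set of S-linear maps of the form s ↦ Σ_i φ_i(F^e_*(c_i·s)) with c_i ∈ (I^{[q]} : I) and φ_i ∈ Hom_S(F^e_* S, S). Then: (i) every φ ∈ M satisfies φ(F^e_* I) ⊆ I, so it induces an R-linear map φ/I : F^e_* R → R; (ii) the map M → Hom_R(F^e_* R, R) sending φ to φ/I is surjective; and (iii) its kernel is the submodule (F^e_* I^{[q]})·Hom_S(F^e_* S, S). -/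

import Mathlib

/-- The `q`-th Frobenius power `I^{[q]}` of an ideal: the ideal generated by
the `q`-th powers of the elements of `I`. -/
def frobPow {S : Type*} [CommRing S] (q : ℕ) (A : Ideal S) : Ideal S :=
  Ideal.span ((fun f => f ^ q) '' (A : Set S))

/-- `φ` is an `S`-linear map `F^e_* S → S` (with `q = p^e`): it is additive
and satisfies `φ(s^q · x) = s · φ(x)`. -/
def IsFeLinear {S : Type*} [CommRing S] (q : ℕ) (φ : S → S) : Prop :=
  (∀ x y : S, φ (x + y) = φ x + φ y) ∧ ∀ s x : S, φ (s ^ q * x) = s * φ x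

/-- `φ` lies in the `F^e_* S`-submodule `(F^e_* J) · Hom_S(F^e_* S, S)`:
it is a finite sum of maps `s ↦ ψᵢ(cᵢ · s)` with `cᵢ ∈ J` and `ψᵢ`
`S`-linear. -/
def InFeSubmodule {S : Type*} [CommRing S] (q : ℕ) (J : Ideal S)
    (φ : S → S) : Prop :=
  ∃ (m : ℕ) (c : Fin m → S) (ψ : Fin m → S → S),
    (∀ i, c i ∈ J) ∧ (∀ i, IsFeLinear q (ψ i)) ∧
    ∀ s : S, φ s = ∑ i, ψ i (c i * s)

open MvPolynomial

namespace Fedder19aux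

variable {k : Type*} [Field k] {n : ℕ} (q : ℕ) (ρ : k ≃+* k)

noncomputable def ea (a : Fin n → Fin q) : Fin n →₀ ℕ :=
  Finsupp.equivFunOnFinite.symm fun i => (a i : ℕ)

noncomputable def tops (a : Fin n → Fin q) : Fin n →₀ ℕ :=
  Finsupp.equivFunOnFinite.symm fun i => q - 1 - (a i : ℕ)

lemma hinj (hq : 0 < q) (a : Fin n → Fin q) :
    Function.Injective (fun m' : Fin n →₀ ℕ => q • m' + ea q a) := by
  intro x y h
  ext i
  have h2 : q • x + ea q a = q • y + ea q a := h
  have h3 := congrArg (fun f : Fin n →₀ ℕ => f i) h2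
  simp only [Finsupp.add_apply, Finsupp.smul_apply, smul_eq_mul, add_left_inj] at h3
  exact Nat.eq_of_mul_eq_mul_left hq h3

noncomputable def root (hq : 0 < q) (a : Fin n → Fin q) (f : MvPolynomial (Fin n) k) :
    MvPolynomial (Fin n) k :=
  AddMonoidAlgebra.ofCoeff (Finsupp.mapRange ⇑ρ (map_zero ρ)
    (Finsupp.comapDomain (fun m' => q • m' + ea q a) (AddMonoidAlgebra.coeff f) ((hinj q hq a).injOn)))

lemma coeff_root (hq : 0 < q) (a : Fin n → Fin q) (f : MvPolynomial (Fin n) k) (m' : Fin n →₀ ℕ) :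
    coeff m' (root q ρ hq a f) = ρ (coeff (q • m' + ea q a) f) := rfl

-- ### Nat helpers
lemma small_mod (hq : 0 < q) (v : ℕ) (hv : v < 2 * q) :
    v % q = if v < q then v else v - q := by
  split_ifs with h
  · exact Nat.mod_eq_of_lt h
  · rw [Nat.mod_eq_sub_mod (le_of_not_gt h), Nat.mod_eq_of_lt (by omega)]

lemma mod_shift' (hq : 0 < q) {b : ℕ} (M : ℕ) (hb : b < q) :
    (q - 1 - b + M) % q = q - 1 ↔ M % q = b := by
  have hr : M % q < q := Nat.mod_lt _ hq
  have key : q - 1 - b + M = q * (M / q) + (q - 1 - b + M % q) := by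
    have := Nat.div_add_mod M q; omega
  rw [key, Nat.mul_add_mod, small_mod q hq _ (by omega)]
  split_ifs <;> omega

lemma div_shift' (hq : 0 < q) {b M : ℕ} (hb : b < q) (h : M % q = b) :
    (q - 1 - b + M) / q = M / q := by
  obtain ⟨t, rfl⟩ : ∃ t, M = q * t + b :=
    ⟨M / q, by rw [← h]; exact (Nat.div_add_mod M q).symm⟩
  have key : q - 1 - b + (q * t + b) = q * t + (q - 1) := by omega
  rw [key, Nat.mul_add_div hq, Nat.mul_add_div hq, Nat.div_eq_of_lt (by omega),
    Nat.div_eq_of_lt hb]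

lemma nat_decomp (hq : 0 < q) {b M m' : ℕ} (hb : b < q) :
    M = q * m' + b ↔ (M % q = b ∧ M / q = m') := by
  constructor
  · rintro rfl
    rw [Nat.mul_add_mod, Nat.mod_eq_of_lt hb, Nat.mul_add_div hq, Nat.div_eq_of_lt hb,
      Nat.add_zero]
    exact ⟨rfl, rfl⟩
  · rintro ⟨rfl, rfl⟩
    exact (Nat.div_add_mod M q).symm

-- ### key exponent equivalence
lemma exp_decomp (hq : 0 < q) (a : Fin n → Fin q) (M m' : Fin n →₀ ℕ) :
    M = q • m' + ea q a ↔
      ((∀ i, M i % q = (a i : ℕ)) ∧ Finsupp.mapRange (· / q) (Nat.zero_div q) M = m') := by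
  constructor
  · rintro rfl
    have happ : ∀ i, (q • m' + ea q a) i = q * m' i + (a i : ℕ) := fun i => by
      simp [Finsupp.add_apply, Finsupp.smul_apply, smul_eq_mul, ea]
    constructor
    · intro i
      rw [happ i]
      exact ((nat_decomp q hq (a i).isLt).mp rfl).1
    · ext i
      rw [Finsupp.mapRange_apply, happ i]
      exact ((nat_decomp q hq (a i).isLt).mp rfl).2
  · rintro ⟨h1, rfl⟩
    ext i
    have : M i = q * (M i / q) + (a i : ℕ) := (nat_decomp q hq (a i).isLt).mpr ⟨h1 i, rfl⟩
    simpa [Finsupp.add_apply, Finsupp.smul_apply, smul_eq_mul, ea, Finsupp.mapRange_apply]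
      using this

lemma root_monomial (hq : 0 < q) (a : Fin n → Fin q) (M : Fin n →₀ ℕ) (c : k) :
    root q ρ hq a (monomial M c) =
      if ∀ i, M i % q = (a i : ℕ) then
        monomial (Finsupp.mapRange (· / q) (Nat.zero_div q) M) (ρ c) else 0 := by
  ext m'
  rw [coeff_root, coeff_monomial]
  by_cases h1 : ∀ i, M i % q = (a i : ℕ)
  · rw [if_pos h1, coeff_monomial]
    by_cases h2 : Finsupp.mapRange (· / q) (Nat.zero_div q) M = m'
    · rw [if_pos h2, if_pos ((exp_decomp q hq a M m').mpr ⟨h1, h2⟩)]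
    · rw [if_neg h2, if_neg (fun hM => h2 ((exp_decomp q hq a M m').mp hM).2), map_zero]
  · rw [if_neg h1, coeff_zero, if_neg (fun hM => h1 ((exp_decomp q hq a M m').mp hM).1), map_zero]

lemma root_add (hq : 0 < q) (a : Fin n → Fin q) (f g : MvPolynomial (Fin n) k) :
    root q ρ hq a (f + g) = root q ρ hq a f + root q ρ hq a g := by
  ext m'
  simp only [coeff_root, coeff_add, map_add]

noncomputable def rootHom (hq : 0 < q) (a : Fin n → Fin q) :
    MvPolynomial (Fin n) k →+ MvPolynomial (Fin n) k :=
  AddMonoidHom.mk' (root q ρ hq a) (fun f g => root_add q ρ hq a f g)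

lemma root_sum (hq : 0 < q) (a : Fin n → Fin q) {α : Type*} (s : Finset α)
    (f : α → MvPolynomial (Fin n) k) :
    root q ρ hq a (∑ i ∈ s, f i) = ∑ i ∈ s, root q ρ hq a (f i) :=
  map_sum (rootHom q ρ hq a) f s

lemma root_qpow_mul (hq : 0 < q) (hρ2 : ∀ c : k, ρ (c ^ q) = c)
    (hfd : ∀ x y : MvPolynomial (Fin n) k, (x + y) ^ q = x ^ q + y ^ q)
    (a : Fin n → Fin q) (t f : MvPolynomial (Fin n) k) :
    root q ρ hq a (t ^ q * f) = t * root q ρ hq a f := by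
  induction t using MvPolynomial.induction_on' with
  | add t₁ t₂ h₁ h₂ =>
    rw [hfd, add_mul, root_add, h₁, h₂, add_mul]
  | monomial N c =>
    induction f using MvPolynomial.induction_on' with
    | add f₁ f₂ h₁ h₂ =>
      rw [mul_add, root_add, h₁, h₂, root_add, mul_add]
    | monomial M d =>
      rw [monomial_pow, monomial_mul, root_monomial, root_monomial]
      have hcond : (∀ i, (q • N + M) i % q = (a i : ℕ)) ↔ (∀ i, M i % q = (a i : ℕ)) := by
        apply forall_congr'
        intro i
        have : (q • N + M) i = q * N i + M i := by
          simp [Finsupp.add_apply, Finsupp.smul_apply, smul_eq_mul]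
        rw [this, Nat.mul_add_mod]
      by_cases h : ∀ i, M i % q = (a i : ℕ)
      · rw [if_pos (hcond.mpr h), if_pos h, monomial_mul]
        have hexp : Finsupp.mapRange (· / q) (Nat.zero_div q) (q • N + M)
            = N + Finsupp.mapRange (· / q) (Nat.zero_div q) M := by
          ext i
          simp only [Finsupp.mapRange_apply, Finsupp.add_apply, Finsupp.smul_apply, smul_eq_mul]
          rw [Nat.mul_add_div hq]
        rw [hexp, map_mul, hρ2]
      · rw [if_neg (fun hh => h (hcond.mp hh)), if_neg h, mul_zero]

lemma decomp (hq : 0 < q) (hρ1 : ∀ c : k, ρ c ^ q = c)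
    (hfd : ∀ x y : MvPolynomial (Fin n) k, (x + y) ^ q = x ^ q + y ^ q)
    (f : MvPolynomial (Fin n) k) :
    ∑ a : Fin n → Fin q, (root q ρ hq a f) ^ q * monomial (ea q a) (1 : k) = f := by
  induction f using MvPolynomial.induction_on' with
  | add f₁ f₂ h₁ h₂ =>
    conv_rhs => rw [← h₁, ← h₂]
    rw [← Finset.sum_add_distrib]
    apply Finset.sum_congr rfl
    intro a _
    rw [root_add, hfd, add_mul]
  | monomial M c =>
    have ha₀ : ∀ i : Fin n, M i % q < q := fun i => Nat.mod_lt _ hq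
    set a₀ : Fin n → Fin q := fun i => ⟨M i % q, ha₀ i⟩ with ha₀def
    rw [Finset.sum_eq_single a₀]
    · rw [root_monomial, if_pos (fun i => rfl), monomial_pow, monomial_mul, mul_one, hρ1]
      have hexp : q • Finsupp.mapRange (· / q) (Nat.zero_div q) M + ea q a₀ = M := by
        ext i
        simp only [Finsupp.add_apply, Finsupp.smul_apply, smul_eq_mul, Finsupp.mapRange_apply]
        exact Nat.div_add_mod (M i) q
      rw [hexp]
    · intro a _ hne
      rw [root_monomial, if_neg, zero_pow (by omega), zero_mul]
      intro hc
      exact hne (funext fun i => Fin.ext (hc i).symm)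
    · intro h
      exact absurd (Finset.mem_univ a₀) h

/-- the "top" box element `(q-1, …, q-1)` -/
def topf (hq : 0 < q) : Fin n → Fin q := fun _ => ⟨q - 1, by omega⟩

lemma shift (hq : 0 < q) (a : Fin n → Fin q) (f : MvPolynomial (Fin n) k) :
    root q ρ hq (topf q hq) (monomial (tops q a) 1 * f) = root q ρ hq a f := by
  induction f using MvPolynomial.induction_on' with
  | add f₁ f₂ h₁ h₂ =>
    rw [mul_add, root_add, h₁, h₂, root_add]
  | monomial M c =>
    rw [monomial_mul, one_mul, root_monomial, root_monomial]
    have happ : ∀ i, (tops q a + M) i = q - 1 - (a i : ℕ) + M i := fun i => by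
      simp [Finsupp.add_apply, tops]
    have hcond : (∀ i, (tops q a + M) i % q = ((topf q hq i : Fin q) : ℕ)) ↔
        (∀ i, M i % q = (a i : ℕ)) := by
      apply forall_congr'
      intro i
      rw [happ i]
      exact mod_shift' q hq (M i) (a i).isLt
    by_cases h : ∀ i, M i % q = (a i : ℕ)
    · rw [if_pos (hcond.mpr h), if_pos h]
      have hexp : Finsupp.mapRange (· / q) (Nat.zero_div q) (tops q a + M)
          = Finsupp.mapRange (· / q) (Nat.zero_div q) M := by
        ext i
        simp only [Finsupp.mapRange_apply]
        rw [happ i]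
        exact div_shift' q hq (a i).isLt (h i)
      rw [hexp]
    · rw [if_neg (fun hh => h (hcond.mp hh)), if_neg h]

lemma isFeLinear_root (hq : 0 < q) (hρ2 : ∀ c : k, ρ (c ^ q) = c)
    (hfd : ∀ x y : MvPolynomial (Fin n) k, (x + y) ^ q = x ^ q + y ^ q)
    (a : Fin n → Fin q) : IsFeLinear q (root q ρ hq a) :=
  ⟨root_add q ρ hq a, root_qpow_mul q ρ hq hρ2 hfd a⟩

lemma feLinear_frobPow {I : Ideal (MvPolynomial (Fin n) k)}
    {ψ : MvPolynomial (Fin n) k → MvPolynomial (Fin n) k}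
    (hψ : IsFeLinear q ψ) {x : MvPolynomial (Fin n) k} (hx : x ∈ frobPow q I) :
    ψ x ∈ I := by
  obtain ⟨m, f, g, hx⟩ := Submodule.mem_span_set'.mp hx
  rw [← hx, show ψ (∑ i : Fin m, f i • (g i : MvPolynomial (Fin n) k))
      = ∑ i : Fin m, ψ (f i • (g i : MvPolynomial (Fin n) k))
    from map_sum (AddMonoidHom.mk' ψ hψ.1) _ _]
  apply Ideal.sum_mem
  intro i _
  obtain ⟨y, hy, hyq⟩ := (g i).2
  show ψ (f i • (g i : MvPolynomial (Fin n) k)) ∈ I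
  rw [smul_eq_mul, ← hyq, mul_comm, hψ.2]
  exact I.mul_mem_right _ hy

lemma expand_eval (hq : 0 < q) (hρ2 : ∀ c : k, ρ (c ^ q) = c)
    (hfd : ∀ x y : MvPolynomial (Fin n) k, (x + y) ^ q = x ^ q + y ^ q)
    (v : (Fin n → Fin q) → MvPolynomial (Fin n) k) (s : MvPolynomial (Fin n) k) :
    root q ρ hq (topf q hq) ((∑ a : Fin n → Fin q, (v a) ^ q * monomial (tops q a) 1) * s)
      = ∑ a : Fin n → Fin q, v a * root q ρ hq a s := by
  rw [Finset.sum_mul, root_sum]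
  apply Finset.sum_congr rfl
  intro a _
  rw [mul_assoc, root_qpow_mul q ρ hq hρ2 hfd, shift]

lemma reprr (hq : 0 < q) (hρ1 : ∀ c : k, ρ c ^ q = c) (hρ2 : ∀ c : k, ρ (c ^ q) = c)
    (hfd : ∀ x y : MvPolynomial (Fin n) k, (x + y) ^ q = x ^ q + y ^ q)
    (φ : MvPolynomial (Fin n) k → MvPolynomial (Fin n) k) (hφ : IsFeLinear q φ)
    (s : MvPolynomial (Fin n) k) :
    φ s = root q ρ hq (topf q hq)
      ((∑ a : Fin n → Fin q, (φ (monomial (ea q a) 1)) ^ q * monomial (tops q a) 1) * s) := by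
  rw [expand_eval q ρ hq hρ2 hfd]
  conv_lhs => rw [← decomp q ρ hq hρ1 hfd s]
  rw [show φ (∑ a : Fin n → Fin q, (root q ρ hq a s) ^ q * monomial (ea q a) 1)
      = ∑ a : Fin n → Fin q, φ ((root q ρ hq a s) ^ q * monomial (ea q a) 1)
    from map_sum (AddMonoidHom.mk' φ hφ.1) _ _]
  apply Finset.sum_congr rfl
  intro a _
  show φ ((root q ρ hq a s) ^ q * monomial (ea q a) 1) = _
  rw [hφ.2, mul_comm]

lemma key (hq : 0 < q) (hρ1 : ∀ c : k, ρ c ^ q = c) (hρ2 : ∀ c : k, ρ (c ^ q) = c)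
    (hfd : ∀ x y : MvPolynomial (Fin n) k, (x + y) ^ q = x ^ q + y ^ q)
    (I : Ideal (MvPolynomial (Fin n) k)) (u : MvPolynomial (Fin n) k) :
    (∀ s, root q ρ hq (topf q hq) (u * s) ∈ I) ↔ u ∈ frobPow q I := by
  constructor
  · intro h
    have hmem : (∑ a : Fin n → Fin q, (root q ρ hq a u) ^ q * monomial (ea q a) (1 : k))
        ∈ frobPow q I := by
      apply Ideal.sum_mem
      intro a _
      apply Ideal.mul_mem_right
      apply Ideal.subset_span
      refine ⟨root q ρ hq a u, ?_, rfl⟩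
      rw [← shift q ρ hq a u, mul_comm]
      exact h _
    rwa [decomp q ρ hq hρ1 hfd u] at hmem
  · intro hu s
    exact feLinear_frobPow q (isFeLinear_root q ρ hq hρ2 hfd (topf q hq))
      (Ideal.mul_mem_right s _ hu)

end Fedder19aux

open Fedder19aux in

/-- Fedder's Lemma, part (d): the submodule
`M = (F^e_*(I^{[q]} : I)) · Hom_S(F^e_* S, S)` consists of maps compatible
with `I`; the map `M → Hom_R(F^e_* R, R)`, `φ ↦ φ/I`, is surjective, and its
kernel is `(F^e_* I^{[q]}) · Hom_S(F^e_* S, S)`. -/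
theorem stmt_19 {k : Type*} [Field k] (p : ℕ) (hp : p.Prime) [CharP k p]
    [PerfectField k]
    (n e : ℕ) (he : 1 ≤ e)
    (I : Ideal (MvPolynomial (Fin n) k)) :
    (∀ φ : MvPolynomial (Fin n) k → MvPolynomial (Fin n) k,
      InFeSubmodule (p ^ e) (Submodule.colon (frobPow (p ^ e) I) I) φ →
      ∀ x ∈ I, φ x ∈ I) ∧
    (∀ ψ : MvPolynomial (Fin n) k ⧸ I → MvPolynomial (Fin n) k ⧸ I,
      (∀ x y, ψ (x + y) = ψ x + ψ y) →
      (∀ r x, ψ (r ^ p ^ e * x) = r * ψ x) →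
      ∃ φ : MvPolynomial (Fin n) k → MvPolynomial (Fin n) k,
        InFeSubmodule (p ^ e) (Submodule.colon (frobPow (p ^ e) I) I) φ ∧
        ∀ s, Ideal.Quotient.mk I (φ s) = ψ (Ideal.Quotient.mk I s)) ∧
    (∀ φ : MvPolynomial (Fin n) k → MvPolynomial (Fin n) k,
      InFeSubmodule (p ^ e) (Submodule.colon (frobPow (p ^ e) I) I) φ →
      ((∀ s, Ideal.Quotient.mk I (φ s) = 0) ↔
        InFeSubmodule (p ^ e) (frobPow (p ^ e) I) φ)) := by
  haveI : Fact p.Prime := ⟨hp⟩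
  haveI : ExpChar k p := ExpChar.prime hp
  have hq : 0 < p ^ e := pow_pos hp.pos e
  set q := p ^ e with hqdef
  let ρ : k ≃+* k := (iterateFrobeniusEquiv k p e).symm
  have hρ1 : ∀ c : k, ρ c ^ q = c := fun c => (iterateFrobeniusEquiv k p e).apply_symm_apply c
  have hρ2 : ∀ c : k, ρ (c ^ q) = c := fun c => (iterateFrobeniusEquiv k p e).symm_apply_apply c
  have hfd : ∀ x y : MvPolynomial (Fin n) k, (x + y) ^ q = x ^ q + y ^ q :=
    fun x y => add_pow_char_pow x y p e
  refine ⟨?_, ?_, ?_⟩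
  · -- Part (i): maps in M are compatible with I
    rintro φ ⟨m, c, ψ, hc, hψ, hrep⟩ x hx
    rw [hrep]
    apply Ideal.sum_mem
    intro i _
    have hcx : c i * x ∈ frobPow q I := by
      have := Submodule.mem_colon.mp (hc i) x hx
      rwa [smul_eq_mul] at this
    exact feLinear_frobPow q (hψ i) hcx
  · -- Part (ii): surjectivity
    intro ψ hadd hlin
    have hψ0 : ψ 0 = 0 := by
      have h := hadd 0 0
      rw [add_zero] at h
      exact add_eq_left.mp h.symm
    choose sec hsec using fun r : MvPolynomial (Fin n) k ⧸ I =>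
      Ideal.Quotient.mk_surjective (I := I) r
    set v : (Fin n → Fin q) → MvPolynomial (Fin n) k :=
      fun a => sec (ψ (Ideal.Quotient.mk I (monomial (ea q a) 1))) with hv
    set u : MvPolynomial (Fin n) k :=
      ∑ a : Fin n → Fin q, (v a) ^ q * monomial (tops q a) 1 with hu
    set φ : MvPolynomial (Fin n) k → MvPolynomial (Fin n) k :=
      fun s => root q ρ hq (topf q hq) (u * s) with hφ
    have hcomm : ∀ s, Ideal.Quotient.mk I (φ s) = ψ (Ideal.Quotient.mk I s) := by
      intro s
      show Ideal.Quotient.mk I (root q ρ hq (topf q hq) (u * s)) = _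
      rw [hu, expand_eval q ρ hq hρ2 hfd v s, map_sum (Ideal.Quotient.mk I)]
      have hterm : ∀ a : Fin n → Fin q,
          Ideal.Quotient.mk I (v a * root q ρ hq a s)
            = ψ (Ideal.Quotient.mk I ((root q ρ hq a s) ^ q * monomial (ea q a) 1)) := by
        intro a
        rw [map_mul, hsec, mul_comm, ← hlin, ← map_pow, ← map_mul]
      rw [Finset.sum_congr rfl (fun a _ => hterm a),
        show (∑ a : Fin n → Fin q,
            ψ (Ideal.Quotient.mk I ((root q ρ hq a s) ^ q * monomial (ea q a) 1)))
          = ψ (∑ a : Fin n → Fin q,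
            Ideal.Quotient.mk I ((root q ρ hq a s) ^ q * monomial (ea q a) 1))
          from (map_sum (AddMonoidHom.mk' ψ hadd) _ _).symm,
        ← map_sum (Ideal.Quotient.mk I), decomp q ρ hq hρ1 hfd s]
    have hφI : ∀ x ∈ I, φ x ∈ I := by
      intro x hx
      rw [← Ideal.Quotient.eq_zero_iff_mem, hcomm x,
        Ideal.Quotient.eq_zero_iff_mem.mpr hx, hψ0]
    have hucolon : u ∈ Submodule.colon (frobPow q I) I := by
      rw [Submodule.mem_colon]
      intro x hx
      rw [smul_eq_mul]
      refine (key q ρ hq hρ1 hρ2 hfd I (u * x)).mp ?_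
      intro s
      rw [mul_assoc]
      exact hφI (x * s) (I.mul_mem_right s hx)
    refine ⟨φ, ⟨1, fun _ => u, fun _ => root q ρ hq (topf q hq), fun _ => hucolon,
      fun _ => isFeLinear_root q ρ hq hρ2 hfd (topf q hq), fun s => ?_⟩, hcomm⟩
    rw [Fin.sum_univ_one]
  · -- Part (iii): kernel
    rintro φ ⟨m, c, cψ, hc, hcψ, hrep⟩
    constructor
    · intro h0
      have hlin : IsFeLinear q φ := by
        constructor
        · intro x y
          rw [hrep, hrep, hrep, ← Finset.sum_add_distrib]
          exact Finset.sum_congr rfl fun i _ => by rw [mul_add, (hcψ i).1]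
        · intro t s
          rw [hrep, hrep, Finset.mul_sum]
          exact Finset.sum_congr rfl fun i _ => by
            rw [mul_left_comm (c i) (t ^ q) s, (hcψ i).2]
      have hrepr := reprr q ρ hq hρ1 hρ2 hfd φ hlin
      set u : MvPolynomial (Fin n) k :=
        ∑ a : Fin n → Fin q, (φ (monomial (ea q a) 1)) ^ q * monomial (tops q a) 1 with hu
      have humem : u ∈ frobPow q I := by
        refine (key q ρ hq hρ1 hρ2 hfd I u).mp ?_
        intro s
        rw [← hrepr s]
        exact Ideal.Quotient.eq_zero_iff_mem.mp (h0 s)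
      refine ⟨1, fun _ => u, fun _ => root q ρ hq (topf q hq), fun _ => humem,
        fun _ => isFeLinear_root q ρ hq hρ2 hfd (topf q hq), fun s => ?_⟩
      rw [Fin.sum_univ_one]
      exact hrepr s
    · rintro ⟨m', c', ψ', hc', hψ', hrep'⟩ s
      rw [hrep', Ideal.Quotient.eq_zero_iff_mem]
      apply Ideal.sum_mem
      intro i _
      exact feLinear_frobPow q (hψ' i) (Ideal.mul_mem_right s _ (hc' i))
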